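/- arXiv:1204.4040 — 3 statements merged into one kernel-verified Lean document; each statement's English description precedes it below -/
import Mathlib

section
/- (Gram–Hadamard inequality) Let H be a complex inner product space and let A₁, …, A_n and B₁, …, B_n be vectors in H. Let M be the n×n complex matrix with entries M_{ij} = ⟨A_i, B_j⟩. Then |det M| ≤ ∏_{i=1}^{n} ‖A_i‖ · ‖B_i‖, where ‖·‖ is the norm induced by the inner product. -/
open Submodule Finset Matrix InnerProductSpace

section Aux

variable {H : Type*} [NormedAddCommGroup H] [InnerProductSpace ℂ H]

local notation "⟪" x ", " y "⟫" => @inner ℂ _ _ x y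

/-- linear functional `⟪x, ·⟫` vanishing on a set vanishes on its span. -/
private lemma inner_zero_of_mem_span {x : H} {s : Set H}
    (h : ∀ y ∈ s, ⟪x, y⟫ = 0) {w : H} (hw : w ∈ span ℂ s) : ⟪x, w⟫ = 0 := by
  induction hw using span_induction with
  | mem y hy => exact h y hy
  | zero => simp
  | add y z _ _ hy hz => rw [inner_add_right, hy, hz, add_zero]
  | smul c y _ hy => rw [inner_smul_right, hy, mul_zero]

/-- Parseval-type expansion for vectors in the span of an orthonormal family. -/
private lemma sum_inner_mul_inner_of_mem_span {m : ℕ} {e : Fin m → H}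
    (he : Orthonormal ℂ e) (x : H) {w : H} (hw : w ∈ span ℂ (Set.range e)) :
    ∑ k, ⟪x, e k⟫ * ⟪e k, w⟫ = ⟪x, w⟫ := by
  have key : ∑ k, ⟪e k, w⟫ • e k = w := by
    induction hw using span_induction with
    | mem y hy =>
      obtain ⟨j, rfl⟩ := hy
      have := he
      rw [orthonormal_iff_ite] at this
      simp [this, ite_smul]
    | zero => simp
    | add y z _ _ hy hz =>
      simp only [inner_add_right, add_smul, Finset.sum_add_distrib, hy, hz]
    | smul c y _ hy =>
      simp only [inner_smul_right, mul_smul, ← Finset.smul_sum, hy]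
  calc ∑ k, ⟪x, e k⟫ * ⟪e k, w⟫ = ⟪x, ∑ k, ⟪e k, w⟫ • e k⟫ := by
        rw [inner_sum]
        refine Finset.sum_congr rfl fun k _ => ?_
        rw [inner_smul_right]; ring
    _ = ⟪x, w⟫ := by rw [key]

/-- If the `B j` are linearly dependent, the mixed Gram matrix has zero determinant. -/
private lemma det_eq_zero_of_right_dep {m : ℕ} {A B : Fin m → H}
    (hB : ¬ LinearIndependent ℂ B) :
    (Matrix.of fun i j => ⟪A i, B j⟫).det = 0 := by
  rw [Fintype.not_linearIndependent_iff] at hB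
  obtain ⟨g, hg, i₀, hi₀⟩ := hB
  rw [← Matrix.exists_mulVec_eq_zero_iff]
  refine ⟨g, fun h => hi₀ (by simp [h]), ?_⟩
  funext i
  have : ((Matrix.of fun i j => ⟪A i, B j⟫) *ᵥ g) i = ⟪A i, ∑ j, g j • B j⟫ := by
    rw [inner_sum]
    simp [Matrix.mulVec, dotProduct, inner_smul_right, mul_comm]
  rw [Pi.zero_apply, this, hg, inner_zero_right]

/-- If the `A i` are linearly dependent, the mixed Gram matrix has zero determinant. -/
private lemma det_eq_zero_of_left_dep {m : ℕ} {A B : Fin m → H}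
    (hA : ¬ LinearIndependent ℂ A) :
    (Matrix.of fun i j => ⟪A i, B j⟫).det = 0 := by
  rw [Fintype.not_linearIndependent_iff] at hA
  obtain ⟨g, hg, i₀, hi₀⟩ := hA
  rw [← Matrix.exists_vecMul_eq_zero_iff]
  refine ⟨fun i => starRingEnd ℂ (g i), fun h => hi₀ ?_, ?_⟩
  · have := congrFun h i₀
    simpa using this
  funext j
  have : ((fun i => starRingEnd ℂ (g i)) ᵥ* (Matrix.of fun i j => ⟪A i, B j⟫)) j
      = ⟪∑ i, g i • A i, B j⟫ := by
    rw [sum_inner]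
    simp [Matrix.vecMul, dotProduct, inner_smul_left]
  rw [Pi.zero_apply, this, hg, inner_zero_left]

/-- Key factorization step: factor through an orthonormal family `e` that spans the
`B j` in a triangular fashion. -/
private lemma key_factor {m : ℕ} (A B e : Fin m → H) (he : Orthonormal ℂ e)
    (hspan : ∀ j, B j ∈ span ℂ (Set.range e))
    (htri0 : ∀ k j, j < k → ⟪e k, B j⟫ = 0) :
    ‖(Matrix.of fun i j => ⟪A i, B j⟫).det‖ ≤
      ‖(Matrix.of fun i k => ⟪A i, e k⟫).det‖ * ∏ j, ‖B j‖ := by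
  classical
  set C : Matrix (Fin m) (Fin m) ℂ := Matrix.of fun i k => ⟪A i, e k⟫ with hC
  set R : Matrix (Fin m) (Fin m) ℂ := Matrix.of fun k j => ⟪e k, B j⟫ with hR
  have hfac : (Matrix.of fun i j => ⟪A i, B j⟫) = C * R := by
    ext i j
    rw [Matrix.mul_apply]
    exact (sum_inner_mul_inner_of_mem_span he (A i) (hspan j)).symm
  have htri : R.BlockTriangular id := by
    intro k j hkj
    exact htri0 k j hkj
  have hdetR : R.det = ∏ j, R j j := Matrix.det_of_upperTriangular htri
  have hRjj : ∀ j, ‖R j j‖ ≤ ‖B j‖ := by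
    intro j
    calc ‖R j j‖ ≤ ‖e j‖ * ‖B j‖ := norm_inner_le_norm _ _
      _ = ‖B j‖ := by rw [he.1 j, one_mul]
  calc ‖(Matrix.of fun i j => ⟪A i, B j⟫).det‖ = ‖C.det‖ * ‖R.det‖ := by
        rw [hfac, Matrix.det_mul, norm_mul]
    _ ≤ ‖C.det‖ * ∏ j, ‖B j‖ := by
        refine mul_le_mul_of_nonneg_left ?_ (norm_nonneg _)
        rw [hdetR]
        calc ‖∏ j, R j j‖ = ∏ j, ‖R j j‖ := by
              rw [norm_prod]
          _ ≤ ∏ j, ‖B j‖ :=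
              Finset.prod_le_prod (fun j _ => norm_nonneg _) (fun j _ => hRjj j)

end Aux

/-- Gram–Hadamard inequality: if `M_{ij} = ⟨A_i, B_j⟩` for vectors `A_i, B_j` in a
complex inner product space, then `|det M| ≤ ∏_i ‖A_i‖ ‖B_i‖`. -/
theorem gram_hadamard {H : Type*} [NormedAddCommGroup H] [InnerProductSpace ℂ H]
    (n : ℕ) (A B : Fin n → H) (M : Matrix (Fin n) (Fin n) ℂ)
    (hM : ∀ i j : Fin n, M i j = (inner ℂ (A i) (B j) : ℂ)) :
    ‖M.det‖ ≤ ∏ i : Fin n, ‖A i‖ * ‖B i‖ := by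
  classical
  haveI : WellFoundedLT (Fin n) := inferInstance
  have hM' : M = Matrix.of fun i j => (inner ℂ (A i) (B j) : ℂ) := by
    ext i j; exact hM i j
  have hRHS : (∏ i : Fin n, ‖A i‖ * ‖B i‖) = (∏ i, ‖A i‖) * ∏ i, ‖B i‖ :=
    Finset.prod_mul_distrib
  have hRHSnn : (0:ℝ) ≤ ∏ i : Fin n, ‖A i‖ * ‖B i‖ :=
    Finset.prod_nonneg fun i _ => mul_nonneg (norm_nonneg _) (norm_nonneg _)
  by_cases hB : LinearIndependent ℂ B
  swap
  · rw [hM', det_eq_zero_of_right_dep hB, norm_zero]; exact hRHSnn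
  -- first Gram–Schmidt step
  set e : Fin n → H := gramSchmidtNormed ℂ B with he_def
  have he : Orthonormal ℂ e := gramSchmidtNormed_orthonormal hB
  have hspanB : ∀ j, B j ∈ span ℂ (Set.range e) := by
    intro j
    have : span ℂ (Set.range e) = span ℂ (Set.range B) := by
      rw [he_def, span_gramSchmidtNormed_range, span_gramSchmidt]
    rw [this]; exact subset_span ⟨j, rfl⟩
  have htriB : ∀ k j : Fin n, j < k → (inner ℂ (e k) (B j) : ℂ) = 0 := by
    intro k j hkj
    have hBj : B j ∈ span ℂ (gramSchmidt ℂ B '' Set.Iic j) :=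
      mem_span_gramSchmidt ℂ B le_rfl
    refine inner_zero_of_mem_span (fun y hy => ?_) hBj
    obtain ⟨l, hl, rfl⟩ := hy
    have hkl : (k : Fin n) ≠ l := fun h => absurd (h ▸ hl) (not_le.mpr hkj)
    rw [he_def, gramSchmidtNormed, inner_smul_left]
    rw [gramSchmidt_orthogonal ℂ B hkl, mul_zero]
  have step1 : ‖M.det‖ ≤
      ‖(Matrix.of fun i k => (inner ℂ (A i) (e k) : ℂ)).det‖ * ∏ j, ‖B j‖ := by
    rw [hM']; exact key_factor A B e he hspanB htriB
  -- the projections of the `A i` onto the span of `e`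
  set K : Submodule ℂ H := span ℂ (Set.range e) with hK
  haveI : FiniteDimensional ℂ K := FiniteDimensional.span_of_finite ℂ (Set.finite_range e)
  set a : Fin n → H := fun i => (orthogonalProjection K (A i) : H) with ha_def
  have haK : ∀ i, a i ∈ K := fun i => (orthogonalProjection K (A i)).2
  have hae : ∀ i k, (inner ℂ (a i) (e k) : ℂ) = inner ℂ (A i) (e k) := by
    intro i k
    have h1 : (inner ℂ (e k) (A i - a i) : ℂ) = 0 := by
      have := sub_starProjection_mem_orthogonal (K := K) (A i)
      exact ((Submodule.mem_orthogonal K _).mp this (e k) (subset_span ⟨k, rfl⟩))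
    have h2 : (inner ℂ (A i - a i) (e k) : ℂ) = 0 := by
      rw [← inner_conj_symm, h1, map_zero]
    rw [inner_sub_left] at h2
    linear_combination -h2
  have hanorm : ∀ i, ‖a i‖ ≤ ‖A i‖ := by
    intro i
    calc ‖a i‖ = ‖orthogonalProjection K (A i)‖ := rfl
      _ ≤ ‖orthogonalProjection K‖ * ‖A i‖ := (orthogonalProjection K).le_opNorm _
      _ ≤ 1 * ‖A i‖ := by
          exact mul_le_mul_of_nonneg_right (orthogonalProjection_norm_le K) (norm_nonneg _)
      _ = ‖A i‖ := one_mul _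
  have hCa : (Matrix.of fun i k => (inner ℂ (A i) (e k) : ℂ))
      = Matrix.of fun i k => (inner ℂ (a i) (e k) : ℂ) := by
    ext i k; exact (hae i k).symm
  -- bound ‖det C‖ by ∏ ‖A i‖
  have step2 : ‖(Matrix.of fun i k => (inner ℂ (A i) (e k) : ℂ)).det‖ ≤ ∏ i, ‖A i‖ := by
    rw [hCa]
    by_cases ha : LinearIndependent ℂ a
    swap
    · rw [det_eq_zero_of_left_dep ha, norm_zero]
      exact Finset.prod_nonneg fun i _ => norm_nonneg _
    -- second Gram–Schmidt step, applied to the transposed situation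
    set f : Fin n → H := gramSchmidtNormed ℂ a with hf_def
    have hf : Orthonormal ℂ f := gramSchmidtNormed_orthonormal ha
    have hspana : ∀ i, a i ∈ span ℂ (Set.range f) := by
      intro i
      have : span ℂ (Set.range f) = span ℂ (Set.range a) := by
        rw [hf_def, span_gramSchmidtNormed_range, span_gramSchmidt]
      rw [this]; exact subset_span ⟨i, rfl⟩
    have htria : ∀ l i : Fin n, i < l → (inner ℂ (f l) (a i) : ℂ) = 0 := by
      intro l i hli
      have hai : a i ∈ span ℂ (gramSchmidt ℂ a '' Set.Iic i) :=
        mem_span_gramSchmidt ℂ a le_rfl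
      refine inner_zero_of_mem_span (fun y hy => ?_) hai
      obtain ⟨l', hl', rfl⟩ := hy
      have hkl : (l : Fin n) ≠ l' := fun h => absurd (h ▸ hl') (not_le.mpr hli)
      rw [hf_def, gramSchmidtNormed, inner_smul_left]
      rw [gramSchmidt_orthogonal ℂ a hkl, mul_zero]
    have hNC : (Matrix.of fun k i => (inner ℂ (e k) (a i) : ℂ))
        = (Matrix.of fun i k => (inner ℂ (a i) (e k) : ℂ))ᴴ := by
      ext k i
      simp only [Matrix.of_apply, Matrix.conjTranspose_apply,
        ← inner_conj_symm (e k) (a i)]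
      rfl
    have hstep : ‖(Matrix.of fun k i => (inner ℂ (e k) (a i) : ℂ)).det‖ ≤
        ‖(Matrix.of fun k l => (inner ℂ (e k) (f l) : ℂ)).det‖ * ∏ i, ‖a i‖ :=
      key_factor e a f hf hspana htria
    -- the middle matrix is unitary-like: Dᴴ * D = 1
    set D : Matrix (Fin n) (Fin n) ℂ := Matrix.of fun k l => (inner ℂ (e k) (f l) : ℂ) with hD
    have hfK : ∀ l, f l ∈ K := by
      intro l
      have h1 : f l ∈ span ℂ (Set.range a) := by
        rw [← span_gramSchmidt (𝕜 := ℂ) (f := a), ← span_gramSchmidtNormed_range]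
        exact subset_span ⟨l, rfl⟩
      refine span_le.mpr ?_ h1
      rintro - ⟨i, rfl⟩
      exact haK i
    have hunit : Dᴴ * D = 1 := by
      ext l m
      rw [Matrix.mul_apply]
      have : ∀ k, Dᴴ l k * D k m = (inner ℂ (f l) (e k) : ℂ) * inner ℂ (e k) (f m) := by
        intro k
        rw [Matrix.conjTranspose_apply, hD]
        rw [← inner_conj_symm (f l) (e k)]
        simp
      calc ∑ k, Dᴴ l k * D k m = ∑ k, (inner ℂ (f l) (e k) : ℂ) * inner ℂ (e k) (f m) :=
            Finset.sum_congr rfl fun k _ => this k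
        _ = inner ℂ (f l) (f m) := sum_inner_mul_inner_of_mem_span he (f l) (hfK m)
        _ = (1 : Matrix (Fin n) (Fin n) ℂ) l m := by
            have := hf
            rw [orthonormal_iff_ite] at this
            rw [this l m, Matrix.one_apply]
    have hDdet : ‖D.det‖ = 1 := by
      have h1 : Dᴴ.det * D.det = 1 := by rw [← Matrix.det_mul, hunit, Matrix.det_one]
      have h2 : ‖Dᴴ.det‖ * ‖D.det‖ = 1 := by rw [← norm_mul, h1, norm_one]
      rw [Matrix.det_conjTranspose, norm_star] at h2
      nlinarith [norm_nonneg D.det]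
    have hCdet : ‖(Matrix.of fun i k => (inner ℂ (a i) (e k) : ℂ)).det‖
        = ‖(Matrix.of fun k i => (inner ℂ (e k) (a i) : ℂ)).det‖ := by
      rw [hNC, Matrix.det_conjTranspose, norm_star]
    calc ‖(Matrix.of fun i k => (inner ℂ (a i) (e k) : ℂ)).det‖
        = ‖(Matrix.of fun k i => (inner ℂ (e k) (a i) : ℂ)).det‖ := hCdet
      _ ≤ ‖D.det‖ * ∏ i, ‖a i‖ := hstep
      _ = ∏ i, ‖a i‖ := by rw [hDdet, one_mul]
      _ ≤ ∏ i, ‖A i‖ :=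
          Finset.prod_le_prod (fun i _ => norm_nonneg _) (fun i _ => hanorm i)
  calc ‖M.det‖ ≤ ‖(Matrix.of fun i k => (inner ℂ (A i) (e k) : ℂ)).det‖ * ∏ j, ‖B j‖ := step1
    _ ≤ (∏ i, ‖A i‖) * ∏ j, ‖B j‖ :=
        mul_le_mul_of_nonneg_right step2 (Finset.prod_nonneg fun j _ => norm_nonneg _)
    _ = ∏ i : Fin n, ‖A i‖ * ‖B i‖ := hRHS.symm
end

section
/- For all real numbers α > 0 and c > 0, the doubly infinite sum c_α := Σ_{h ∈ ℤ} 2^{α h} e^{−c·2^h} converges and satisfies c_α ≤ c^{−α} · ( Γ(α)/log 2 + (α/e)^α ), where Γ is the Euler Gamma function and log is the natural logarithm. -/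
open Real Set MeasureTheory

/-- Pointwise maximum bound: `y^β e^{-cy} ≤ c^{-β} (β/e)^β` for `y ≥ 0`. -/
lemma dyadic_aux_max {β c : ℝ} (hβ : 0 < β) (hc : 0 < c) {y : ℝ} (hy : 0 ≤ y) :
    y ^ β * Real.exp (-c * y) ≤ c ^ (-β) * (β / Real.exp 1) ^ β := by
  have hrhs : (0:ℝ) ≤ c ^ (-β) * (β / Real.exp 1) ^ β := by positivity
  rcases eq_or_lt_of_le hy with rfl | hy
  · rw [Real.zero_rpow hβ.ne', zero_mul]; exact hrhs
  · have he : (0:ℝ) < Real.exp 1 := Real.exp_pos 1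
    set t : ℝ := c * y / β with ht
    have ht0 : 0 < t := by positivity
    have hexpt : 0 < Real.exp t := Real.exp_pos t
    have htle : t * Real.exp 1 ≤ Real.exp t := by
      have h1 : t ≤ Real.exp (t - 1) := by
        have := Real.add_one_le_exp (t - 1); linarith
      have h2 : Real.exp (t - 1) = Real.exp t / Real.exp 1 := Real.exp_sub t 1
      rw [h2, le_div_iff₀ he] at h1; exact h1
    have key : y * Real.exp (-(c * y) / β) ≤ β / (c * Real.exp 1) := by
      have hyt : y = β * t / c := by rw [ht]; field_simp
      have hexp : Real.exp (-(c * y) / β) = (Real.exp t)⁻¹ := by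
        rw [← Real.exp_neg]; congr 1; rw [ht]; ring
      have h3 : t * Real.exp 1 * (Real.exp t)⁻¹ ≤ 1 := by
        have := mul_le_mul_of_nonneg_right htle (inv_nonneg.mpr hexpt.le)
        rwa [mul_inv_cancel₀ hexpt.ne'] at this
      rw [hexp, hyt, div_mul_eq_mul_div, div_le_div_iff₀ hc (by positivity)]
      calc β * t * (Real.exp t)⁻¹ * (c * Real.exp 1)
          = (β * c) * (t * Real.exp 1 * (Real.exp t)⁻¹) := by ring
        _ ≤ (β * c) * 1 := mul_le_mul_of_nonneg_left h3 (by positivity)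
        _ = β * c := by ring
    have hEpos : (0:ℝ) < Real.exp (-(c * y) / β) := Real.exp_pos _
    have e1 : Real.exp (-c * y) = Real.exp (-(c * y) / β) ^ β := by
      rw [← Real.exp_mul]; congr 1; field_simp
    calc y ^ β * Real.exp (-c * y)
        = (y * Real.exp (-(c * y) / β)) ^ β := by
          rw [e1, Real.mul_rpow hy.le hEpos.le]
      _ ≤ (β / (c * Real.exp 1)) ^ β :=
          Real.rpow_le_rpow (by positivity) key hβ.le
      _ = c ^ (-β) * (β / Real.exp 1) ^ β := by
          rw [show β / (c * Real.exp 1) = c⁻¹ * (β / Real.exp 1) by field_simp,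
            Real.mul_rpow (by positivity) (by positivity),
            Real.inv_rpow hc.le, ← Real.rpow_neg hc.le]

/-- The function `y ↦ y^α e^{-cy}` is monotone on `[0, α/c]`. -/
lemma dyadic_aux_monoOn {α c : ℝ} (hα : 0 < α) (hc : 0 < c) :
    MonotoneOn (fun y : ℝ => y ^ α * Real.exp (-c * y)) (Icc 0 (α / c)) := by
  have hcont : Continuous (fun y : ℝ => y ^ α * Real.exp (-c * y)) :=
    (continuous_id.rpow_const fun x => Or.inr hα.le).mul
      ((continuous_const.mul continuous_id).rexp)
  have hd : ∀ y : ℝ, 0 < y → HasDerivAt (fun y : ℝ => y ^ α * Real.exp (-c * y))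
      (Real.exp (-c * y) * y ^ (α - 1) * (α - c * y)) y := by
    intro y hy
    have h1 : HasDerivAt (fun x : ℝ => x ^ α) (α * y ^ (α - 1)) y :=
      Real.hasDerivAt_rpow_const (Or.inl hy.ne')
    have h2 : HasDerivAt (fun y : ℝ => Real.exp (-c * y)) (Real.exp (-c * y) * (-c)) y := by
      simpa using ((hasDerivAt_id y).const_mul (-c)).exp
    have := h1.mul h2
    refine this.congr_deriv ?_
    have hpow : y ^ α = y ^ (α - 1) * y := by
      rw [← Real.rpow_add_one hy.ne' (α - 1)]; ring_nf
    rw [hpow]; ring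
  apply monotoneOn_of_hasDerivWithinAt_nonneg (convex_Icc _ _) hcont.continuousOn
    (f' := fun y => Real.exp (-c * y) * y ^ (α - 1) * (α - c * y))
  · intro y hy
    rw [interior_Icc] at hy
    exact (hd y hy.1).hasDerivWithinAt
  · intro y hy
    rw [interior_Icc] at hy
    have h1 : c * y ≤ α := by
      have := hy.2.le
      rw [le_div_iff₀ hc] at this; linarith
    have hy0 : 0 < y := hy.1
    have h2 : (0:ℝ) ≤ Real.exp (-c * y) * y ^ (α - 1) := by positivity
    nlinarith

/-- The function `y ↦ y^α e^{-cy}` is antitone on `[α/c, ∞)`. -/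
lemma dyadic_aux_antiOn {α c : ℝ} (hα : 0 < α) (hc : 0 < c) :
    AntitoneOn (fun y : ℝ => y ^ α * Real.exp (-c * y)) (Ici (α / c)) := by
  have hcont : Continuous (fun y : ℝ => y ^ α * Real.exp (-c * y)) :=
    (continuous_id.rpow_const fun x => Or.inr hα.le).mul
      ((continuous_const.mul continuous_id).rexp)
  have hd : ∀ y : ℝ, 0 < y → HasDerivAt (fun y : ℝ => y ^ α * Real.exp (-c * y))
      (Real.exp (-c * y) * y ^ (α - 1) * (α - c * y)) y := by
    intro y hy
    have h1 : HasDerivAt (fun x : ℝ => x ^ α) (α * y ^ (α - 1)) y :=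
      Real.hasDerivAt_rpow_const (Or.inl hy.ne')
    have h2 : HasDerivAt (fun y : ℝ => Real.exp (-c * y)) (Real.exp (-c * y) * (-c)) y := by
      simpa using ((hasDerivAt_id y).const_mul (-c)).exp
    have := h1.mul h2
    refine this.congr_deriv ?_
    have hpow : y ^ α = y ^ (α - 1) * y := by
      rw [← Real.rpow_add_one hy.ne' (α - 1)]; ring_nf
    rw [hpow]; ring
  have hp : (0:ℝ) < α / c := by positivity
  apply antitoneOn_of_hasDerivWithinAt_nonpos (convex_Ici _) hcont.continuousOn
    (f' := fun y => Real.exp (-c * y) * y ^ (α - 1) * (α - c * y))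
  · intro y hy
    rw [interior_Ici] at hy
    exact (hd y (hp.trans hy)).hasDerivWithinAt
  · intro y hy
    rw [interior_Ici] at hy
    have hy0 : 0 < y := hp.trans hy
    have h1 : α ≤ c * y := by
      have h := mem_Ioi.mp hy
      rw [div_lt_iff₀ hc] at h; nlinarith
    have h2 : (0:ℝ) ≤ Real.exp (-c * y) * y ^ (α - 1) := by positivity
    nlinarith

/-- Continuity of the integrand. -/
lemma dyadic_aux_cont {α c : ℝ} :
    Continuous (fun x : ℝ => (2:ℝ) ^ (α * x) * Real.exp (-c * (2:ℝ) ^ x)) := by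
  have h2 : Continuous (fun z : ℝ => (2:ℝ) ^ z) :=
    continuous_iff_continuousAt.2 fun b => Real.continuousAt_const_rpow two_ne_zero
  exact (h2.comp (continuous_const.mul continuous_id)).mul
    ((continuous_const.mul h2).rexp)

/-- Integrability and value of the integral `∫ 2^{αx} e^{-c 2^x} dx`. -/
lemma dyadic_aux_integral {α c : ℝ} (hα : 0 < α) (hc : 0 < c) :
    Integrable (fun x : ℝ => (2:ℝ) ^ (α * x) * Real.exp (-c * (2:ℝ) ^ x)) volume ∧
    ∫ x : ℝ, (2:ℝ) ^ (α * x) * Real.exp (-c * (2:ℝ) ^ x)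
      = (1 / Real.log 2) * ((1 / c) ^ α * Real.Gamma α) := by
  have hlog : (0:ℝ) < Real.log 2 := Real.log_pos one_lt_two
  set φ : ℝ → ℝ := fun x => (2:ℝ) ^ x with hφ
  set g₂ : ℝ → ℝ := fun y => y ^ (α - 1) * Real.exp (-(c * y)) with hg₂def
  have hderiv : ∀ x ∈ (univ : Set ℝ), HasDerivWithinAt φ ((2:ℝ) ^ x * Real.log 2) univ x :=
    fun x _ => ((hasStrictDerivAt_const_rpow two_pos x).hasDerivAt).hasDerivWithinAt
  have hinj : InjOn φ univ := by
    have hsm : StrictMono φ := fun a b h => Real.rpow_lt_rpow_of_exponent_lt one_lt_two h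
    exact hsm.injective.injOn
  have himg : φ '' univ = Ioi 0 := by
    rw [image_univ]
    ext y
    simp only [mem_range, mem_Ioi]
    constructor
    · rintro ⟨x, rfl⟩; exact Real.rpow_pos_of_pos two_pos x
    · intro hy; exact ⟨Real.logb 2 y, Real.rpow_logb two_pos (by norm_num) hy⟩
  have hg₂ : IntegrableOn g₂ (Ioi 0) := by
    have := integrableOn_rpow_mul_exp_neg_mul_rpow (p := 1) (s := α - 1) (b := c)
      (by linarith) one_pos hc
    simpa [Real.rpow_one, neg_mul] using this
  have hkey : ∀ x : ℝ, |(2:ℝ) ^ x * Real.log 2| • g₂ ((2:ℝ) ^ x)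
      = Real.log 2 * ((2:ℝ) ^ (α * x) * Real.exp (-c * (2:ℝ) ^ x)) := by
    intro x
    have h2x : (0:ℝ) < (2:ℝ) ^ x := Real.rpow_pos_of_pos two_pos x
    have e2 : (2:ℝ) ^ x * ((2:ℝ) ^ x) ^ (α - 1) = (2:ℝ) ^ (α * x) := by
      rw [← Real.rpow_mul (by norm_num : (0:ℝ) ≤ 2) x (α - 1),
        ← Real.rpow_add two_pos]
      congr 1; ring
    rw [abs_of_pos (by positivity), smul_eq_mul, hg₂def]
    calc ((2:ℝ) ^ x * Real.log 2) * (((2:ℝ) ^ x) ^ (α - 1) * Real.exp (-(c * (2:ℝ) ^ x)))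
        = Real.log 2 * (((2:ℝ) ^ x * ((2:ℝ) ^ x) ^ (α - 1)) * Real.exp (-(c * (2:ℝ) ^ x))) := by
          ring
      _ = Real.log 2 * ((2:ℝ) ^ (α * x) * Real.exp (-c * (2:ℝ) ^ x)) := by
          rw [e2, neg_mul]
  have hiff := integrableOn_image_iff_integrableOn_abs_deriv_smul MeasurableSet.univ hderiv hinj g₂
  rw [himg] at hiff
  have hint2 : Integrable (fun x : ℝ => Real.log 2 *
      ((2:ℝ) ^ (α * x) * Real.exp (-c * (2:ℝ) ^ x))) volume := by
    have h := hiff.mp hg₂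
    rw [integrableOn_univ] at h
    exact h.congr (Filter.Eventually.of_forall hkey)
  have hint : Integrable (fun x : ℝ => (2:ℝ) ^ (α * x) * Real.exp (-c * (2:ℝ) ^ x)) volume := by
    have h := hint2.const_mul (Real.log 2)⁻¹
    refine h.congr (Filter.Eventually.of_forall fun x => ?_)
    field_simp
  refine ⟨hint, ?_⟩
  have hval : ∫ y in Ioi (0:ℝ), g₂ y = (1 / c) ^ α * Real.Gamma α :=
    Real.integral_rpow_mul_exp_neg_mul_Ioi hα hc
  have hchg := integral_image_eq_integral_abs_deriv_smul MeasurableSet.univ hderiv hinj g₂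
  rw [himg] at hchg
  rw [hchg] at hval
  rw [MeasureTheory.setIntegral_univ] at hval
  simp_rw [hφ, hkey] at hval
  rw [MeasureTheory.integral_const_mul] at hval
  rw [← hval]
  field_simp

lemma dyadic_aux_feq {α c : ℝ} (x : ℝ) :
    (2:ℝ) ^ (α * x) * Real.exp (-c * (2:ℝ) ^ x)
      = ((2:ℝ) ^ x) ^ α * Real.exp (-c * (2:ℝ) ^ x) := by
  rw [mul_comm α x, Real.rpow_mul (by norm_num : (0:ℝ) ≤ 2)]

lemma dyadic_aux_fmono {α c : ℝ} (hα : 0 < α) (hc : 0 < c) :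
    MonotoneOn (fun x : ℝ => (2:ℝ) ^ (α * x) * Real.exp (-c * (2:ℝ) ^ x))
      (Iic (Real.logb 2 (α / c))) := by
  intro x hx y hy hxy
  simp only [mem_Iic] at hx hy
  have hmem : ∀ z : ℝ, z ≤ Real.logb 2 (α / c) → (2:ℝ) ^ z ∈ Icc (0:ℝ) (α / c) := by
    intro z hz
    refine ⟨(Real.rpow_pos_of_pos two_pos z).le, ?_⟩
    calc (2:ℝ) ^ z ≤ (2:ℝ) ^ (Real.logb 2 (α / c)) :=
          Real.rpow_le_rpow_of_exponent_le one_le_two hz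
      _ = α / c := Real.rpow_logb two_pos (by norm_num) (by positivity)
  simp only
  rw [dyadic_aux_feq, dyadic_aux_feq]
  exact dyadic_aux_monoOn hα hc (hmem x hx) (hmem y hy)
    (Real.rpow_le_rpow_of_exponent_le one_le_two hxy)

lemma dyadic_aux_fanti {α c : ℝ} (hα : 0 < α) (hc : 0 < c) :
    AntitoneOn (fun x : ℝ => (2:ℝ) ^ (α * x) * Real.exp (-c * (2:ℝ) ^ x))
      (Ici (Real.logb 2 (α / c))) := by
  intro x hx y hy hxy
  simp only [mem_Ici] at hx hy
  have hmem : ∀ z : ℝ, Real.logb 2 (α / c) ≤ z → (2:ℝ) ^ z ∈ Ici (α / c) := by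
    intro z hz
    rw [mem_Ici]
    calc α / c = (2:ℝ) ^ (Real.logb 2 (α / c)) :=
          (Real.rpow_logb two_pos (by norm_num) (by positivity)).symm
      _ ≤ (2:ℝ) ^ z := Real.rpow_le_rpow_of_exponent_le one_le_two hz
  simp only
  rw [dyadic_aux_feq, dyadic_aux_feq]
  exact dyadic_aux_antiOn hα hc (hmem x hx) (hmem y hy)
    (Real.rpow_le_rpow_of_exponent_le one_le_two hxy)

lemma dyadic_aux_summable {α c : ℝ} (hα : 0 < α) (hc : 0 < c) :
    Summable (fun h : ℤ => (2:ℝ) ^ (α * (h : ℝ)) * Real.exp (-c * (2:ℝ) ^ (h : ℝ))) := by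
  apply Summable.of_nat_of_neg
  · set K : ℝ := c ^ (-(α+1)) * ((α+1) / Real.exp 1) ^ (α+1) with hK
    have hKpos : 0 ≤ K := by positivity
    apply Summable.of_nonneg_of_le (fun n => by positivity) (fun n => ?_)
      ((summable_geometric_of_lt_one (by norm_num) (by norm_num : (1/2:ℝ) < 1)).mul_left K)
    push_cast
    set y : ℝ := (2:ℝ) ^ (n : ℝ) with hy
    have hy0 : 0 < y := Real.rpow_pos_of_pos two_pos _
    have hmax : y ^ (α+1) * Real.exp (-c * y) ≤ K :=
      dyadic_aux_max (by linarith) hc hy0.le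
    have hsplit : y ^ α * Real.exp (-c * y) = (y ^ (α+1) * Real.exp (-c * y)) * y⁻¹ := by
      rw [Real.rpow_add hy0, Real.rpow_one]
      field_simp
    have hyinv : y⁻¹ = (1/2 : ℝ) ^ n := by
      rw [hy, Real.rpow_natCast, one_div, inv_pow]
    rw [dyadic_aux_feq, ← hy, hsplit, hyinv]
    exact mul_le_mul_of_nonneg_right hmax (by positivity)
  · set r : ℝ := (2:ℝ) ^ (-α) with hr
    have hr0 : 0 ≤ r := (Real.rpow_pos_of_pos two_pos _).le
    have hr1 : r < 1 := Real.rpow_lt_one_of_one_lt_of_neg one_lt_two (by linarith)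
    apply Summable.of_nonneg_of_le (fun n => by positivity) (fun n => ?_)
      (summable_geometric_of_lt_one hr0 hr1)
    push_cast
    have h1 : Real.exp (-c * (2:ℝ) ^ (-(n:ℝ))) ≤ 1 := by
      rw [Real.exp_le_one_iff]
      have := (Real.rpow_pos_of_pos two_pos (-(n:ℝ)))
      nlinarith
    have h2 : (2:ℝ) ^ (α * -(n:ℝ)) = r ^ n := by
      rw [hr, show α * -(n:ℝ) = (-α) * (n:ℝ) by ring, Real.rpow_mul (by norm_num : (0:ℝ) ≤ 2),
        Real.rpow_natCast]
    calc (2:ℝ) ^ (α * -(n:ℝ)) * Real.exp (-c * (2:ℝ) ^ (-(n:ℝ)))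
        ≤ (2:ℝ) ^ (α * -(n:ℝ)) * 1 := by
          apply mul_le_mul_of_nonneg_left h1 (Real.rpow_pos_of_pos two_pos _).le
      _ = r ^ n := by rw [mul_one, h2]

lemma dyadic_aux_sum_finset {α c : ℝ} (hα : 0 < α) (hc : 0 < c) (s : Finset ℤ) :
    ∑ i ∈ s, (2:ℝ) ^ (α * (i : ℝ)) * Real.exp (-c * (2:ℝ) ^ (i : ℝ))
      ≤ (∫ x : ℝ, (2:ℝ) ^ (α * x) * Real.exp (-c * (2:ℝ) ^ x))
        + c ^ (-α) * (α / Real.exp 1) ^ α := by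
  classical
  set F : ℝ → ℝ := fun x => (2:ℝ) ^ (α * x) * Real.exp (-c * (2:ℝ) ^ x) with hF
  have hFpos : ∀ x : ℝ, 0 ≤ F x := fun x => by rw [hF]; positivity
  have hFmax : ∀ x : ℝ, F x ≤ c ^ (-α) * (α / Real.exp 1) ^ α := by
    intro x
    rw [hF]
    simp only
    rw [dyadic_aux_feq]
    exact dyadic_aux_max hα hc (Real.rpow_pos_of_pos two_pos x).le
  have hFint : Integrable F volume := (dyadic_aux_integral hα hc).1
  have hFii : ∀ u v : ℝ, IntervalIntegrable F volume u v :=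
    fun u v => dyadic_aux_cont.intervalIntegrable u v
  set m : ℝ := Real.logb 2 (α / c) with hm
  set h0 : ℤ := ⌊m⌋ with hh0
  have hm1 : (h0 : ℝ) ≤ m := Int.floor_le m
  have hm2 : m ≤ (h0 : ℝ) + 1 := (Int.lt_floor_add_one m).le
  obtain ⟨N, hN⟩ : ∃ N : ℕ, ∀ i ∈ s, h0 - 1 - (N : ℤ) ≤ i ∧ i ≤ h0 + 2 + (N : ℤ) := by
    refine ⟨s.sup fun i => (h0 - 1 - i).toNat ⊔ (i - (h0 + 2)).toNat, fun i hi => ?_⟩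
    have h1 : (h0 - 1 - i).toNat ⊔ (i - (h0 + 2)).toNat
        ≤ s.sup fun i => (h0 - 1 - i).toNat ⊔ (i - (h0 + 2)).toNat :=
      Finset.le_sup (f := fun i => (h0 - 1 - i).toNat ⊔ (i - (h0 + 2)).toNat) hi
    have h2 := le_trans (le_max_left ((h0 - 1 - i).toNat) ((i - (h0 + 2)).toNat)) h1
    have h3 := le_trans (le_max_right ((h0 - 1 - i).toNat) ((i - (h0 + 2)).toNat)) h1
    omega
  set A : Finset ℤ := Finset.Icc (h0 - 1 - (N : ℤ)) (h0 - 1) with hA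
  set B : Finset ℤ := Finset.Icc (h0 + 2) (h0 + 2 + (N : ℤ)) with hB
  have hsubset : s ⊆ Finset.Icc (h0 - 1 - (N : ℤ)) (h0 + 2 + (N : ℤ)) := fun i hi =>
    Finset.mem_Icc.mpr (hN i hi)
  have hstep1 : ∑ i ∈ s, F (i : ℝ)
      ≤ ∑ i ∈ Finset.Icc (h0 - 1 - (N : ℤ)) (h0 + 2 + (N : ℤ)), F (i : ℝ) :=
    Finset.sum_le_sum_of_subset_of_nonneg hsubset fun i _ _ => hFpos _
  have hABC : Finset.Icc (h0 - 1 - (N : ℤ)) (h0 + 2 + (N : ℤ))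
      = (A ∪ B) ∪ {h0, h0 + 1} := by
    ext i
    simp only [Finset.mem_Icc, Finset.mem_union, Finset.mem_insert, Finset.mem_singleton, hA, hB]
    omega
  have hd1 : Disjoint A B := by
    rw [Finset.disjoint_left]
    intro i hi hib
    rw [hA, Finset.mem_Icc] at hi
    rw [hB, Finset.mem_Icc] at hib
    omega
  have hd2 : Disjoint (A ∪ B) ({h0, h0 + 1} : Finset ℤ) := by
    rw [Finset.disjoint_left]
    intro i hi hib
    simp only [Finset.mem_union, hA, hB, Finset.mem_Icc] at hi
    simp only [Finset.mem_insert, Finset.mem_singleton] at hib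
    omega
  have hmid_eq : ∑ i ∈ ({h0, h0 + 1} : Finset ℤ), F (i : ℝ)
      = F (h0 : ℝ) + F ((h0 : ℝ) + 1) := by
    rw [Finset.sum_pair (by omega : h0 ≠ h0 + 1)]
    push_cast
    ring_nf
  -- the left sum
  set xL : ℝ := (h0 : ℝ) - 1 - N with hxL
  have hcastL : xL + ((N + 1 : ℕ) : ℝ) = (h0 : ℝ) := by rw [hxL]; push_cast; ring
  have hAsum : ∑ i ∈ A, F (i : ℝ) ≤ ∫ x in xL..(xL + ((N + 1 : ℕ) : ℝ)), F x := by
    have hsum_eq : ∑ i ∈ A, F (i : ℝ)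
        = ∑ j ∈ Finset.range (N + 1), F (xL + (j : ℕ)) := by
      refine Finset.sum_bij' (fun (i : ℤ) _ => (i - (h0 - 1 - (N : ℤ))).toNat)
        (fun (j : ℕ) _ => h0 - 1 - (N : ℤ) + j) ?_ ?_ ?_ ?_ ?_
      · intro a ha
        rw [hA, Finset.mem_Icc] at ha
        rw [Finset.mem_range]
        beta_reduce
        omega
      · intro a ha
        rw [Finset.mem_range] at ha
        rw [hA, Finset.mem_Icc]
        beta_reduce
        omega
      · intro a ha
        rw [hA, Finset.mem_Icc] at ha
        beta_reduce
        omega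
      · intro a ha
        rw [Finset.mem_range] at ha
        beta_reduce
        omega
      · intro a ha
        rw [hA, Finset.mem_Icc] at ha
        congr 1
        have htn : ((a - (h0 - 1 - (N : ℤ))).toNat : ℤ) = a - (h0 - 1 - (N : ℤ)) :=
          Int.toNat_of_nonneg (by omega)
        have htn' : (((a - (h0 - 1 - (N : ℤ))).toNat : ℕ) : ℝ)
            = ((a : ℝ) - ((h0 : ℝ) - 1 - N)) := by
          rw [← Int.cast_natCast, htn]; push_cast; ring
        rw [htn', hxL]
        ring
    rw [hsum_eq]
    have hmono : MonotoneOn F (Icc xL (xL + ((N + 1 : ℕ) : ℝ))) := by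
      apply (dyadic_aux_fmono hα hc).mono
      intro x hx
      rw [mem_Iic]
      exact (hcastL ▸ hx.2).trans hm1
    exact MonotoneOn.sum_le_integral hmono
  -- the right sum
  set xR : ℝ := (h0 : ℝ) + 1 with hxR
  have hBsum : ∑ i ∈ B, F (i : ℝ) ≤ ∫ x in xR..(xR + ((N + 1 : ℕ) : ℝ)), F x := by
    have hsum_eq : ∑ i ∈ B, F (i : ℝ)
        = ∑ j ∈ Finset.range (N + 1), F (xR + ((j : ℕ) + 1 : ℕ)) := by
      refine Finset.sum_bij' (fun (i : ℤ) _ => (i - (h0 + 2)).toNat)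
        (fun (j : ℕ) _ => h0 + 2 + j) ?_ ?_ ?_ ?_ ?_
      · intro a ha
        rw [hB, Finset.mem_Icc] at ha
        rw [Finset.mem_range]
        beta_reduce
        omega
      · intro a ha
        rw [Finset.mem_range] at ha
        rw [hB, Finset.mem_Icc]
        beta_reduce
        omega
      · intro a ha
        rw [hB, Finset.mem_Icc] at ha
        beta_reduce
        omega
      · intro a ha
        rw [Finset.mem_range] at ha
        beta_reduce
        omega
      · intro a ha
        rw [hB, Finset.mem_Icc] at ha
        congr 1
        have htn : ((a - (h0 + 2)).toNat : ℤ) = a - (h0 + 2) :=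
          Int.toNat_of_nonneg (by omega)
        have htn' : (((a - (h0 + 2)).toNat : ℕ) : ℝ) = ((a : ℝ) - ((h0 : ℝ) + 2)) := by
          rw [← Int.cast_natCast, htn]; push_cast; ring
        push_cast
        rw [htn', hxR]
        ring
    rw [hsum_eq]
    have hanti : AntitoneOn F (Icc xR (xR + ((N + 1 : ℕ) : ℝ))) := by
      apply (dyadic_aux_fanti hα hc).mono
      intro x hx
      rw [mem_Ici]
      exact hm2.trans hx.1
    exact AntitoneOn.sum_le_integral hanti
  -- the middle terms
  have hmid : F (h0 : ℝ) + F ((h0 : ℝ) + 1)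
      ≤ c ^ (-α) * (α / Real.exp 1) ^ α + ∫ x in (h0 : ℝ)..((h0 : ℝ) + 1), F x := by
    have hlow : ∀ x ∈ Icc ((h0 : ℝ)) ((h0 : ℝ) + 1),
        min (F (h0 : ℝ)) (F ((h0 : ℝ) + 1)) ≤ F x := by
      intro x hx
      rcases le_total x m with hxm | hmx
      · exact (min_le_left _ _).trans
          ((dyadic_aux_fmono hα hc) (mem_Iic.mpr hm1) (mem_Iic.mpr hxm) hx.1)
      · exact (min_le_right _ _).trans
          ((dyadic_aux_fanti hα hc) (mem_Ici.mpr hmx) (mem_Ici.mpr hm2) hx.2)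
    have hintlb : min (F (h0 : ℝ)) (F ((h0 : ℝ) + 1))
        ≤ ∫ x in (h0 : ℝ)..((h0 : ℝ) + 1), F x := by
      have h01 : (h0 : ℝ) ≤ (h0 : ℝ) + 1 := by linarith
      have hmono := intervalIntegral.integral_mono_on h01
        (intervalIntegrable_const (c := min (F (h0 : ℝ)) (F ((h0 : ℝ) + 1))))
        (hFii _ _) hlow
      rwa [intervalIntegral.integral_const, smul_eq_mul,
        show (h0 : ℝ) + 1 - (h0 : ℝ) = 1 by ring, one_mul] at hmono
    rcases le_total (F (h0 : ℝ)) (F ((h0 : ℝ) + 1)) with h | h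
    · rw [min_eq_left h] at hintlb
      linarith [hFmax ((h0 : ℝ) + 1)]
    · rw [min_eq_right h] at hintlb
      linarith [hFmax ((h0 : ℝ))]
  -- join the integrals
  have hEnd : (h0 : ℝ) + 1 = xR := hxR.symm
  have hjoin : (∫ x in xL..(xL + ((N + 1 : ℕ) : ℝ)), F x)
      + (∫ x in (h0 : ℝ)..((h0 : ℝ) + 1), F x)
      + (∫ x in xR..(xR + ((N + 1 : ℕ) : ℝ)), F x)
      = ∫ x in xL..(xR + ((N + 1 : ℕ) : ℝ)), F x := by
    rw [hcastL]
    rw [hEnd]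
    rw [intervalIntegral.integral_add_adjacent_intervals (hFii _ _) (hFii _ _),
      intervalIntegral.integral_add_adjacent_intervals (hFii _ _) (hFii _ _)]
  have hfull : (∫ x in xL..(xR + ((N + 1 : ℕ) : ℝ)), F x) ≤ ∫ x : ℝ, F x := by
    rw [intervalIntegral.integral_of_le (by rw [hxL, hxR]; push_cast; linarith)]
    exact setIntegral_le_integral hFint (Filter.Eventually.of_forall fun x => hFpos x)
  -- put it together
  have htotal := hstep1
  rw [hABC, Finset.sum_union hd2, Finset.sum_union hd1, hmid_eq] at htotal
  calc ∑ i ∈ s, F (i : ℝ) ≤ _ := htotal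
    _ ≤ (∫ x : ℝ, F x) + c ^ (-α) * (α / Real.exp 1) ^ α := by linarith

/-- For `α, c > 0`, the doubly infinite sum `c_α = Σ_{h ∈ ℤ} 2^{αh} e^{−c 2^h}`
converges and satisfies `c_α ≤ c^{−α} (Γ(α)/log 2 + (α/e)^α)`. -/
theorem dyadic_scale_sum_bound (α c : ℝ) (hα : 0 < α) (hc : 0 < c) :
    Summable (fun h : ℤ => (2 : ℝ) ^ (α * (h : ℝ)) * Real.exp (-c * (2 : ℝ) ^ (h : ℝ))) ∧
    (∑' h : ℤ, (2 : ℝ) ^ (α * (h : ℝ)) * Real.exp (-c * (2 : ℝ) ^ (h : ℝ)))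
      ≤ c ^ (-α) * (Real.Gamma α / Real.log 2 + (α / Real.exp 1) ^ α) := by
  have hsum := dyadic_aux_summable hα hc
  refine ⟨hsum, ?_⟩
  have h := Summable.tsum_le_of_sum_le hsum (dyadic_aux_sum_finset hα hc)
  refine h.trans (le_of_eq ?_)
  rw [(dyadic_aux_integral hα hc).2]
  have h1c : (1 / c : ℝ) ^ α = c ^ (-α) := by
    rw [one_div, Real.inv_rpow hc.le, ← Real.rpow_neg hc.le]
  rw [h1c]
  have hlog : Real.log 2 ≠ 0 := (Real.log_pos one_lt_two).ne'
  field_simp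
end

section
/- Let θ ∈ (0,1), N ∈ ℤ and ρ > 0. Let 𝔐 be the space of real sequences ν = (ν_h)_{h ≤ N} indexed by integers h ≤ N for which the norm ‖ν‖_θ := sup_{k ≤ N} 2^{θ(N−k)}|ν_k| is finite, and let B_ρ = { ν ∈ 𝔐 : ‖ν‖_θ ≤ ρ }. Suppose that for each integer j ≤ N a function β_j : B_ρ → ℝ is given such that, for all ν, ν' ∈ B_ρ and all j ≤ N: |β_j(ν)| ≤ ρ(2 − 2^{−θ})·2^{θ(j−N)} and |β_j(ν) − β_j(ν')| ≤ L·2^{θ(j−N)}·‖ν − ν'‖_θ, where 0 ≤ L < 2 − 2^{−θ}. Define T : B_ρ → 𝔐 by (Tν)_h = −Σ_{j ≤ h} 2^{j−h−1} β_j(ν). Then T maps B_ρ into B_ρ, T is a contraction on B_ρ with Lipschitz constant L/(2 − 2^{−θ}) < 1 with respect to ‖·‖_θ, and consequently T has a unique fixed point ν* ∈ B_ρ. -/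
open Filter

noncomputable def geoEquiv (h : ℤ) : ℕ ≃ {j : ℤ // j ≤ h} where
  toFun n := ⟨h - n, by omega⟩
  invFun j := (h - j.1).toNat
  left_inv n := by simp
  right_inv j := by
    ext
    have := j.2
    simp
    omega

lemma key_hasSum (θ : ℝ) (hθ0 : 0 < θ) (N h : ℤ) :
    HasSum (fun j : {j : ℤ // j ≤ h} =>
        (2 : ℝ) ^ (((j : ℤ) : ℝ) - (h : ℝ) - 1) * (2 : ℝ) ^ (θ * (((j : ℤ) : ℝ) - (N : ℝ))))
      ((2 : ℝ) ^ (θ * ((h : ℝ) - (N : ℝ))) / (2 - (2 : ℝ) ^ (-θ))) := by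
  set q : ℝ := (2 : ℝ) ^ (-(1 + θ)) with hq
  have hq0 : 0 ≤ q := (Real.rpow_pos_of_pos two_pos _).le
  have hq1 : q < 1 := by
    rw [hq]
    apply Real.rpow_lt_one_of_one_lt_of_neg one_lt_two
    linarith
  set c : ℝ := (2 : ℝ) ^ (θ * ((h : ℝ) - (N : ℝ))) / 2 with hc
  have hgeo : HasSum (fun n : ℕ => c * q ^ n) (c * (1 - q)⁻¹) :=
    (hasSum_geometric_of_lt_one hq0 hq1).mul_left c
  rw [← Equiv.hasSum_iff (geoEquiv h)]
  have heq : ((fun j : {j : ℤ // j ≤ h} =>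
      (2 : ℝ) ^ (((j : ℤ) : ℝ) - (h : ℝ) - 1) * (2 : ℝ) ^ (θ * (((j : ℤ) : ℝ) - (N : ℝ)))) ∘ ⇑(geoEquiv h))
      = fun n : ℕ => c * q ^ n := by
    funext n
    simp only [Function.comp_apply, geoEquiv, Equiv.coe_fn_mk, hc, hq]
    push_cast
    have mul2 : ∀ a : ℝ, (2:ℝ) ^ a * 2 = 2 ^ (a + 1) := fun a => by
      rw [Real.rpow_add two_pos, Real.rpow_one]
    rw [← Real.rpow_natCast ((2:ℝ) ^ (-(1+θ))) n, ← Real.rpow_mul (by norm_num),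
      ← Real.rpow_add two_pos, div_mul_eq_mul_div, ← Real.rpow_add two_pos,
      eq_div_iff (two_ne_zero), mul2]
    congr 1
    push_cast
    ring
  rw [heq]
  have h2 : (1 : ℝ) - q = (2 - (2 : ℝ) ^ (-θ)) / 2 := by
    have e1 := Real.rpow_add two_pos 1 (-(1+θ))
    rw [Real.rpow_one] at e1
    have : (2 : ℝ) ^ (-θ) = 2 * q := by
      rw [hq, ← e1]; norm_num
    rw [this]; ring
  have hD : (0:ℝ) < 2 - (2 : ℝ) ^ (-θ) := by
    have : (2:ℝ) ^ (-θ) < 1 := Real.rpow_lt_one_of_one_lt_of_neg one_lt_two (by linarith)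
    linarith
  have : c * (1 - q)⁻¹ = (2 : ℝ) ^ (θ * ((h : ℝ) - (N : ℝ))) / (2 - (2 : ℝ) ^ (-θ)) := by
    rw [h2, hc]
    field_simp
  rwa [this] at hgeo

/-- If `|f j| ≤ C * g j` termwise and `g` has sum `S`, then `|∑' f| ≤ C * S`. -/
lemma abs_tsum_le_of_le {ι : Type*} (f g : ι → ℝ) (S C : ℝ) (hg : HasSum g S)
    (hfg : ∀ i, |f i| ≤ C * g i) : |∑' i, f i| ≤ C * S := by
  have hCg : HasSum (fun i => C * g i) (C * S) := hg.mul_left C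
  have := tsum_of_norm_bounded hCg (f := f) (fun i => by
    simpa [Real.norm_eq_abs] using hfg i)
  simpa [Real.norm_eq_abs] using this

lemma summable_of_le {ι : Type*} (f g : ι → ℝ) (S C : ℝ) (hg : HasSum g S)
    (hfg : ∀ i, |f i| ≤ C * g i) : Summable f := by
  apply Summable.of_norm_bounded (g := fun i => C * g i) (hg.mul_left C).summable
  intro i
  simpa [Real.norm_eq_abs] using hfg i

/-- `ν` belongs to the ball of radius `ρ` in the weighted `ℓ^∞` norm
`‖ν‖_θ = sup_{k ≤ N} 2^{θ(N−k)} |ν_k|`. -/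
def InThetaBall (θ : ℝ) (N : ℤ) (ρ : ℝ) (ν : ℤ → ℝ) : Prop :=
  ∀ k : ℤ, k ≤ N → |ν k| ≤ ρ * (2 : ℝ) ^ (θ * ((k : ℝ) - (N : ℝ)))

/-- Fixed point equation determining the temperature counterterm: under the
stated bounds and Lipschitz property of the beta function `β_j` on the ball
`B_ρ` of the weighted `ℓ^∞` space, the map `(Tν)_h = −Σ_{j ≤ h} 2^{j−h−1} β_j(ν)`
maps `B_ρ` into itself, is a contraction with constant `L/(2−2^{−θ}) < 1`, and
has a unique fixed point `ν*` in `B_ρ`. -/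
theorem counterterm_fixed_point (θ : ℝ) (hθ0 : 0 < θ) (hθ1 : θ < 1)
    (N : ℤ) (ρ L : ℝ) (hρ : 0 < ρ) (hL0 : 0 ≤ L) (hL : L < 2 - (2 : ℝ) ^ (-θ))
    (β : ℤ → (ℤ → ℝ) → ℝ)
    (hβloc : ∀ j : ℤ, j ≤ N → ∀ ν ν' : ℤ → ℝ,
      (∀ k : ℤ, k ≤ N → ν k = ν' k) → β j ν = β j ν')
    (hβbd : ∀ j : ℤ, j ≤ N → ∀ ν : ℤ → ℝ, InThetaBall θ N ρ ν →
      |β j ν| ≤ ρ * (2 - (2 : ℝ) ^ (-θ)) * (2 : ℝ) ^ (θ * ((j : ℝ) - (N : ℝ))))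
    (hβlip : ∀ j : ℤ, j ≤ N → ∀ ν ν' : ℤ → ℝ,
      InThetaBall θ N ρ ν → InThetaBall θ N ρ ν' → ∀ M : ℝ,
      (∀ k : ℤ, k ≤ N → |ν k - ν' k| ≤ M * (2 : ℝ) ^ (θ * ((k : ℝ) - (N : ℝ)))) →
      |β j ν - β j ν'| ≤ L * M * (2 : ℝ) ^ (θ * ((j : ℝ) - (N : ℝ))))
    (T : (ℤ → ℝ) → (ℤ → ℝ))
    (hT : ∀ ν : ℤ → ℝ, ∀ h : ℤ, h ≤ N →
      T ν h = -∑' j : {j : ℤ // j ≤ h},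
        (2 : ℝ) ^ (((j : ℤ) : ℝ) - (h : ℝ) - 1) * β (j : ℤ) ν) :
    (∀ ν : ℤ → ℝ, InThetaBall θ N ρ ν → ∀ h : ℤ, h ≤ N →
      |T ν h| ≤ ρ * (2 : ℝ) ^ (θ * ((h : ℝ) - (N : ℝ)))) ∧
    (∀ ν ν' : ℤ → ℝ, InThetaBall θ N ρ ν → InThetaBall θ N ρ ν' → ∀ M : ℝ, 0 ≤ M →
      (∀ k : ℤ, k ≤ N → |ν k - ν' k| ≤ M * (2 : ℝ) ^ (θ * ((k : ℝ) - (N : ℝ)))) →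
      ∀ h : ℤ, h ≤ N →
        |T ν h - T ν' h| ≤ (L / (2 - (2 : ℝ) ^ (-θ))) * M * (2 : ℝ) ^ (θ * ((h : ℝ) - (N : ℝ)))) ∧
    (∃ νstar : ℤ → ℝ, InThetaBall θ N ρ νstar ∧ (∀ h : ℤ, h ≤ N → νstar h = T νstar h) ∧
      ∀ ν' : ℤ → ℝ, InThetaBall θ N ρ ν' → (∀ h : ℤ, h ≤ N → ν' h = T ν' h) →
        ∀ h : ℤ, h ≤ N → ν' h = νstar h) := by
  have hD : (0:ℝ) < 2 - (2 : ℝ) ^ (-θ) := by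
    have : (2:ℝ) ^ (-θ) < 1 := Real.rpow_lt_one_of_one_lt_of_neg one_lt_two (by linarith)
    linarith
  set D : ℝ := 2 - (2 : ℝ) ^ (-θ) with hDdef
  set r : ℝ := L / D with hrdef
  have hr0 : 0 ≤ r := div_nonneg hL0 hD.le
  have hr1 : r < 1 := (div_lt_one hD).2 hL
  -- Part 1 : T maps the ball into itself
  have part1 : ∀ ν : ℤ → ℝ, InThetaBall θ N ρ ν → ∀ h : ℤ, h ≤ N →
      |T ν h| ≤ ρ * (2 : ℝ) ^ (θ * ((h : ℝ) - (N : ℝ))) := by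
    intro ν hν h hh
    rw [hT ν h hh, abs_neg]
    have key := key_hasSum θ hθ0 N h
    have hb : ∀ j : {j : ℤ // j ≤ h},
        |(2 : ℝ) ^ (((j : ℤ) : ℝ) - (h : ℝ) - 1) * β (j : ℤ) ν| ≤
          (ρ * D) * ((2 : ℝ) ^ (((j : ℤ) : ℝ) - (h : ℝ) - 1) *
            (2 : ℝ) ^ (θ * (((j : ℤ) : ℝ) - (N : ℝ)))) := by
      intro j
      have hjN : (j : ℤ) ≤ N := le_trans j.2 hh
      have hpos : (0:ℝ) < (2 : ℝ) ^ (((j : ℤ) : ℝ) - (h : ℝ) - 1) := Real.rpow_pos_of_pos two_pos _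
      rw [abs_mul, abs_of_pos hpos]
      calc (2 : ℝ) ^ (((j : ℤ) : ℝ) - (h : ℝ) - 1) * |β (j : ℤ) ν|
          ≤ (2 : ℝ) ^ (((j : ℤ) : ℝ) - (h : ℝ) - 1) *
              (ρ * D * (2 : ℝ) ^ (θ * (((j:ℤ) : ℝ) - (N : ℝ)))) :=
            mul_le_mul_of_nonneg_left (hβbd _ hjN ν hν) hpos.le
        _ = _ := by ring
    calc |∑' j : {j : ℤ // j ≤ h}, (2 : ℝ) ^ (((j : ℤ) : ℝ) - (h : ℝ) - 1) * β (j : ℤ) ν|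
        ≤ (ρ * D) * ((2 : ℝ) ^ (θ * ((h : ℝ) - (N : ℝ))) / D) := abs_tsum_le_of_le _ _ _ _ key hb
      _ = ρ * (2 : ℝ) ^ (θ * ((h : ℝ) - (N : ℝ))) := by field_simp
  -- Part 2 : contraction estimate
  have part2 : ∀ ν ν' : ℤ → ℝ, InThetaBall θ N ρ ν → InThetaBall θ N ρ ν' → ∀ M : ℝ, 0 ≤ M →
      (∀ k : ℤ, k ≤ N → |ν k - ν' k| ≤ M * (2 : ℝ) ^ (θ * ((k : ℝ) - (N : ℝ)))) →
      ∀ h : ℤ, h ≤ N →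
        |T ν h - T ν' h| ≤ r * M * (2 : ℝ) ^ (θ * ((h : ℝ) - (N : ℝ))) := by
    intro ν ν' hν hν' M hM hMk h hh
    rw [hT ν h hh, hT ν' h hh]
    have key := key_hasSum θ hθ0 N h
    set g : {j : ℤ // j ≤ h} → ℝ := fun j =>
      (2 : ℝ) ^ (((j : ℤ) : ℝ) - (h : ℝ) - 1) * (2 : ℝ) ^ (θ * (((j : ℤ) : ℝ) - (N : ℝ))) with hg
    have hsum : ∀ μ : ℤ → ℝ, InThetaBall θ N ρ μ →
        Summable (fun j : {j : ℤ // j ≤ h} =>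
          (2 : ℝ) ^ (((j : ℤ) : ℝ) - (h : ℝ) - 1) * β (j : ℤ) μ) := by
      intro μ hμ
      apply summable_of_le _ g _ (ρ * D) key
      intro j
      have hjN : (j : ℤ) ≤ N := le_trans j.2 hh
      have hpos : (0:ℝ) < (2 : ℝ) ^ (((j : ℤ) : ℝ) - (h : ℝ) - 1) := Real.rpow_pos_of_pos two_pos _
      rw [abs_mul, abs_of_pos hpos, hg]
      calc (2 : ℝ) ^ (((j : ℤ) : ℝ) - (h : ℝ) - 1) * |β (j : ℤ) μ|
          ≤ (2 : ℝ) ^ (((j : ℤ) : ℝ) - (h : ℝ) - 1) *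
              (ρ * D * (2 : ℝ) ^ (θ * (((j:ℤ) : ℝ) - (N : ℝ)))) :=
            mul_le_mul_of_nonneg_left (hβbd _ hjN μ hμ) hpos.le
        _ = _ := by ring
    rw [neg_sub_neg, ← Summable.tsum_sub (hsum ν' hν') (hsum ν hν)]
    have hb : ∀ j : {j : ℤ // j ≤ h},
        |(2 : ℝ) ^ (((j : ℤ) : ℝ) - (h : ℝ) - 1) * β (j : ℤ) ν' -
          (2 : ℝ) ^ (((j : ℤ) : ℝ) - (h : ℝ) - 1) * β (j : ℤ) ν| ≤ (L * M) * g j := by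
      intro j
      have hjN : (j : ℤ) ≤ N := le_trans j.2 hh
      have hpos : (0:ℝ) < (2 : ℝ) ^ (((j : ℤ) : ℝ) - (h : ℝ) - 1) := Real.rpow_pos_of_pos two_pos _
      rw [← mul_sub, abs_mul, abs_of_pos hpos, hg]
      calc (2 : ℝ) ^ (((j : ℤ) : ℝ) - (h : ℝ) - 1) * |β (j : ℤ) ν' - β (j : ℤ) ν|
          ≤ (2 : ℝ) ^ (((j : ℤ) : ℝ) - (h : ℝ) - 1) *
              (L * M * (2 : ℝ) ^ (θ * (((j:ℤ) : ℝ) - (N : ℝ)))) := by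
            refine mul_le_mul_of_nonneg_left ?_ hpos.le
            exact hβlip _ hjN ν' ν hν' hν M (fun k hk => by
              rw [abs_sub_comm]; exact hMk k hk)
        _ = _ := by ring
    calc |∑' j : {j : ℤ // j ≤ h}, ((2 : ℝ) ^ (((j : ℤ) : ℝ) - (h : ℝ) - 1) * β (j : ℤ) ν' -
            (2 : ℝ) ^ (((j : ℤ) : ℝ) - (h : ℝ) - 1) * β (j : ℤ) ν)|
        ≤ (L * M) * ((2 : ℝ) ^ (θ * ((h : ℝ) - (N : ℝ))) / D) := abs_tsum_le_of_le _ _ _ _ key hb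
      _ = r * M * (2 : ℝ) ^ (θ * ((h : ℝ) - (N : ℝ))) := by rw [hrdef]; field_simp
  refine ⟨part1, part2, ?_⟩
  -- Part 3 : existence and uniqueness of the fixed point
  classical
  set step : (ℤ → ℝ) → (ℤ → ℝ) := fun ν k => if k ≤ N then T ν k else 0 with hstep
  set seq : ℕ → (ℤ → ℝ) := fun n => step^[n] (fun _ => 0) with hseqdef
  have hseq0 : seq 0 = fun _ => 0 := rfl
  have hseqS : ∀ n, seq (n + 1) = step (seq n) := fun n => by
    rw [hseqdef]; simp [Function.iterate_succ_apply']
  have hzero_ball : InThetaBall θ N ρ (fun _ => 0) := fun k hk => by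
    simpa using mul_nonneg hρ.le (Real.rpow_pos_of_pos two_pos _).le
  have hball : ∀ n, InThetaBall θ N ρ (seq n) := by
    intro n; induction n with
    | zero => exact hzero_ball
    | succ n ih =>
      intro k hk
      rw [hseqS n]; simp only [hstep, if_pos hk]
      exact part1 (seq n) ih k hk
  have hstepT : ∀ n, ∀ k : ℤ, k ≤ N → seq (n + 1) k = T (seq n) k := by
    intro n k hk; rw [hseqS n]; simp only [hstep, if_pos hk]
  have hdiff : ∀ n, ∀ k : ℤ, k ≤ N →
      |seq (n + 1) k - seq n k| ≤ (ρ * r ^ n) * (2 : ℝ) ^ (θ * ((k : ℝ) - (N : ℝ))) := by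
    intro n; induction n with
    | zero =>
      intro k hk
      rw [hstepT 0 k hk, hseq0]
      simpa using part1 _ hzero_ball k hk
    | succ n ih =>
      intro k hk
      rw [hstepT (n + 1) k hk, hstepT n k hk]
      have h2 := part2 (seq (n + 1)) (seq n) (hball _) (hball _) (ρ * r ^ n)
        (by positivity) ih k hk
      calc |T (seq (n + 1)) k - T (seq n) k|
          ≤ r * (ρ * r ^ n) * (2 : ℝ) ^ (θ * ((k : ℝ) - (N : ℝ))) := h2
        _ = (ρ * r ^ (n + 1)) * (2 : ℝ) ^ (θ * ((k : ℝ) - (N : ℝ))) := by ring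
  have hconst : ∀ k : ℤ, ¬ k ≤ N → ∀ n, seq n k = 0 := by
    intro k hk n
    induction n with
    | zero => rfl
    | succ n ih => rw [hseqS n]; simp only [hstep, if_neg hk]
  have hdist : ∀ k : ℤ, k ≤ N → ∀ n, dist (seq n k) (seq (n + 1) k) ≤
      (ρ * (2 : ℝ) ^ (θ * ((k : ℝ) - (N : ℝ)))) * r ^ n := by
    intro k hk n
    rw [Real.dist_eq, abs_sub_comm]
    calc |seq (n + 1) k - seq n k| ≤ (ρ * r ^ n) * (2 : ℝ) ^ (θ * ((k : ℝ) - (N : ℝ))) :=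
        hdiff n k hk
      _ = (ρ * (2 : ℝ) ^ (θ * ((k : ℝ) - (N : ℝ)))) * r ^ n := by ring
  have hcau : ∀ k : ℤ, ∃ x : ℝ, Tendsto (fun n => seq n k) atTop (nhds x) := by
    intro k
    by_cases hk : k ≤ N
    · exact cauchySeq_tendsto_of_complete
        (cauchySeq_of_le_geometric r _ hr1 (hdist k hk))
    · exact ⟨0, by simp only [hconst k hk]; exact tendsto_const_nhds⟩
  choose νstar hν using hcau
  have htail : ∀ k : ℤ, k ≤ N → ∀ n : ℕ,
      |seq n k - νstar k| ≤ (ρ * r ^ n / (1 - r)) * (2 : ℝ) ^ (θ * ((k : ℝ) - (N : ℝ))) := by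
    intro k hk n
    have := dist_le_of_le_geometric_of_tendsto r _ hr1 (hdist k hk) (hν k) n
    rw [Real.dist_eq] at this
    calc |seq n k - νstar k| ≤ (ρ * (2 : ℝ) ^ (θ * ((k : ℝ) - (N : ℝ)))) * r ^ n / (1 - r) :=
        this
      _ = (ρ * r ^ n / (1 - r)) * (2 : ℝ) ^ (θ * ((k : ℝ) - (N : ℝ))) := by ring
  have h1r : (0:ℝ) < 1 - r := by linarith
  have hstar_ball : InThetaBall θ N ρ νstar := by
    intro k hk
    exact le_of_tendsto (hν k).abs (Filter.Eventually.of_forall fun n => hball n k hk)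
  have hrpow0 : Tendsto (fun n : ℕ => r ^ n) atTop (nhds 0) :=
    tendsto_pow_atTop_nhds_zero_of_lt_one hr0 hr1
  have hfix : ∀ h : ℤ, h ≤ N → νstar h = T νstar h := by
    intro h hh
    have hb : ∀ n : ℕ, |νstar h - T νstar h| ≤
        (2 * ρ / (1 - r) * (2 : ℝ) ^ (θ * ((h : ℝ) - (N : ℝ)))) * r ^ n := by
      intro n
      have t1 : |νstar h - seq (n + 1) h| ≤
          (ρ * r ^ n / (1 - r)) * (2 : ℝ) ^ (θ * ((h : ℝ) - (N : ℝ))) := by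
        rw [abs_sub_comm]
        refine (htail h hh (n + 1)).trans ?_
        have hle : r ^ (n + 1) ≤ r ^ n := pow_le_pow_of_le_one hr0 hr1.le (Nat.le_succ n)
        have hp : (0:ℝ) < (2 : ℝ) ^ (θ * ((h : ℝ) - (N : ℝ))) := Real.rpow_pos_of_pos two_pos _
        have : ρ * r ^ (n + 1) / (1 - r) ≤ ρ * r ^ n / (1 - r) := by
          have hnum : ρ * r ^ (n + 1) ≤ ρ * r ^ n := by nlinarith
          gcongr
        exact mul_le_mul_of_nonneg_right this hp.le
      have t2 : |seq (n + 1) h - T νstar h| ≤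
          (ρ * r ^ n / (1 - r)) * (2 : ℝ) ^ (θ * ((h : ℝ) - (N : ℝ))) := by
        rw [hstepT n h hh]
        have := part2 (seq n) νstar (hball n) hstar_ball (ρ * r ^ n / (1 - r))
          (by positivity) (fun k hk => htail k hk n) h hh
        refine this.trans ?_
        have hp : (0:ℝ) < (2 : ℝ) ^ (θ * ((h : ℝ) - (N : ℝ))) := Real.rpow_pos_of_pos two_pos _
        have hM0 : (0:ℝ) ≤ ρ * r ^ n / (1 - r) := by positivity
        nlinarith [mul_le_mul_of_nonneg_right (mul_le_mul_of_nonneg_right hr1.le hM0) hp.le]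
      calc |νstar h - T νstar h| ≤ |νstar h - seq (n + 1) h| + |seq (n + 1) h - T νstar h| := by
            have := abs_add_le (νstar h - seq (n + 1) h) (seq (n + 1) h - T νstar h)
            simpa using this
        _ ≤ (ρ * r ^ n / (1 - r)) * (2 : ℝ) ^ (θ * ((h : ℝ) - (N : ℝ))) +
            (ρ * r ^ n / (1 - r)) * (2 : ℝ) ^ (θ * ((h : ℝ) - (N : ℝ))) := add_le_add t1 t2
        _ = (2 * ρ / (1 - r) * (2 : ℝ) ^ (θ * ((h : ℝ) - (N : ℝ)))) * r ^ n := by ring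
    have hlim : Tendsto (fun n : ℕ =>
        (2 * ρ / (1 - r) * (2 : ℝ) ^ (θ * ((h : ℝ) - (N : ℝ)))) * r ^ n) atTop (nhds 0) := by
      simpa using hrpow0.const_mul (2 * ρ / (1 - r) * (2 : ℝ) ^ (θ * ((h : ℝ) - (N : ℝ))))
    have h0 : |νstar h - T νstar h| ≤ 0 := ge_of_tendsto' hlim hb
    have := abs_nonneg (νstar h - T νstar h)
    have : νstar h - T νstar h = 0 := by
      have := abs_eq_zero.mp (le_antisymm h0 (abs_nonneg _))
      exact this
    linarith [this]
  refine ⟨νstar, hstar_ball, hfix, ?_⟩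
  intro ν' hν' hfix' h hh
  have key : ∀ n : ℕ, ∀ k : ℤ, k ≤ N →
      |ν' k - νstar k| ≤ (2 * ρ * r ^ n) * (2 : ℝ) ^ (θ * ((k : ℝ) - (N : ℝ))) := by
    intro n; induction n with
    | zero =>
      intro k hk
      have h1 := hν' k hk
      have h2 := hstar_ball k hk
      calc |ν' k - νstar k| ≤ |ν' k| + |νstar k| := by
            have := abs_add_le (ν' k) (-νstar k)
            simpa [sub_eq_add_neg] using this
        _ ≤ (2 * ρ * r ^ 0) * (2 : ℝ) ^ (θ * ((k : ℝ) - (N : ℝ))) := by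
            rw [pow_zero]; linarith
    | succ n ih =>
      intro k hk
      rw [hfix' k hk, hfix k hk]
      have := part2 ν' νstar hν' hstar_ball (2 * ρ * r ^ n) (by positivity) ih k hk
      calc |T ν' k - T νstar k| ≤ r * (2 * ρ * r ^ n) * (2 : ℝ) ^ (θ * ((k : ℝ) - (N : ℝ))) :=
          this
        _ = (2 * ρ * r ^ (n + 1)) * (2 : ℝ) ^ (θ * ((k : ℝ) - (N : ℝ))) := by ring
  have hlim : Tendsto (fun n : ℕ =>
      (2 * ρ * (2 : ℝ) ^ (θ * ((h : ℝ) - (N : ℝ)))) * r ^ n) atTop (nhds 0) := by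
    simpa using hrpow0.const_mul (2 * ρ * (2 : ℝ) ^ (θ * ((h : ℝ) - (N : ℝ))))
  have h0 : |ν' h - νstar h| ≤ 0 := by
    refine ge_of_tendsto' hlim fun n => ?_
    calc |ν' h - νstar h| ≤ (2 * ρ * r ^ n) * (2 : ℝ) ^ (θ * ((h : ℝ) - (N : ℝ))) := key n h hh
      _ = (2 * ρ * (2 : ℝ) ^ (θ * ((h : ℝ) - (N : ℝ)))) * r ^ n := by ring
  have : ν' h - νstar h = 0 := abs_eq_zero.mp (le_antisymm h0 (abs_nonneg _))
  linarith [this]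
end
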